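/- arXiv:1503.03283 — 3 statements merged into one kernel-verified Lean document; each statement's English description precedes it below -/
import Mathlib

section
/- Let p be an odd prime and let a, b ∈ ZMod p with a ≠ 0 and b ≠ 0. The permutation π⁻¹ ∘ π_{(a,b)} of ZMod p × ZMod p has exactly one fixed point, namely (a·(y−1)⁻¹, b·(x−1)⁻¹), and exactly two orbits of size at least 2; moreover the orbit containing (0, b·(x−1)⁻¹) contains the whole set {(c, b·(x−1)⁻¹) : c ∈ ZMod p, c ≠ a·(y−1)⁻¹}, and the other orbit contains the whole set {(a·(y−1)⁻¹, d) : d ∈ ZMod p, d ≠ b·(x−1)⁻¹}. -/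
/-- The map `π_{(a,b)}` on `ZMod p × ZMod p` (with `x` a fixed primitive root mod `p`). -/
def piab {p : ℕ} (x a b : ZMod p) : ZMod p × ZMod p → ZMod p × ZMod p :=
  fun cd =>
    if cd.1 = 0 then
      if a + b + cd.2 ≠ 0 then (a, a + b + cd.2) else (a + x * b, 0)
    else
      if b + cd.2 = 0 then (a + cd.1 + x * b, 0) else (a + cd.1, b + cd.2)

/-- The composite `π⁻¹ ∘ π_{(a,b)}`, where `π(c,d) = (x⁻¹·c, x·d)`,
so `π⁻¹(c,d) = (x·c, x⁻¹·d)`. -/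
def piInvPiab {p : ℕ} (x a b : ZMod p) : ZMod p × ZMod p → ZMod p × ZMod p :=
  fun cd => (x * (piab x a b cd).1, x⁻¹ * (piab x a b cd).2)

/-- The orbit of `u` under `f`: the set `{fᵏ(u) : k ∈ ℕ}`. -/
def orbit {α : Type*} (f : α → α) (u : α) : Set α :=
  {v | ∃ k : ℕ, f^[k] u = v}

/-- The set `𝓘⁽²⁾ = {(0,1), (1,0)} ∪ {(z,z) : z ≠ 0} ∪ {(z, z·x) : z ≠ 0}`. -/
def I2 (p : ℕ) (x : ZMod p) : Set (ZMod p × ZMod p) :=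
  {q | q = (0, 1) ∨ q = (1, 0) ∨ (q.1 ≠ 0 ∧ q.2 = q.1) ∨ (q.1 ≠ 0 ∧ q.2 = q.1 * x)}

namespace S16

structure Ctx (p : ℕ) : Type where
  x : ZMod p
  a : ZMod p
  b : ZMod p
  hp : p.Prime
  hodd : Odd p
  hx : ∀ z : ZMod p, z ≠ 0 → ∃ k : ℕ, x ^ k = z
  ha : a ≠ 0
  hb : b ≠ 0

variable {p : ℕ}

def Ctx.c0 (C : Ctx p) : ZMod p := C.a * (C.x⁻¹ - 1)⁻¹
def Ctx.d0 (C : Ctx p) : ZMod p := C.b * (C.x - 1)⁻¹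
def Ctx.f (C : Ctx p) : ZMod p × ZMod p → ZMod p × ZMod p := piInvPiab C.x C.a C.b
def Ctx.T (C : Ctx p) (d : ZMod p) : ZMod p := -(d + C.a - C.d0) * (C.x * C.d0)⁻¹
def Ctx.eps (C : Ctx p) : ZMod p := C.x * C.b * C.c0⁻¹
def Ctx.del (C : Ctx p) : ZMod p := -C.eps - C.a * (C.x * C.d0)⁻¹

lemma hm1 (C : Ctx p) : (-1 : ZMod p) ≠ 0 := by
  haveI := Fact.mk C.hp; simp

lemma hne2 (C : Ctx p) : (1 : ZMod p) ≠ -1 := by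
  haveI := Fact.mk C.hp
  intro h
  have h2 : ((2 : ℕ) : ZMod p) = 0 := by push_cast; linear_combination h
  rw [ZMod.natCast_eq_zero_iff] at h2
  have := (Nat.prime_dvd_prime_iff_eq C.hp Nat.prime_two).mp h2
  rcases C.hodd with ⟨k, hk⟩
  omega

lemma hx0 (C : Ctx p) : C.x ≠ 0 := by
  intro h
  obtain ⟨k, hk⟩ := C.hx (-1) (hm1 C)
  rcases Nat.eq_zero_or_pos k with hk0 | hk0
  · subst hk0; simp at hk; exact hne2 C hk
  · rw [h, zero_pow hk0.ne'] at hk; exact hm1 C hk.symm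

lemma hx1 (C : Ctx p) : C.x ≠ 1 := by
  intro h
  obtain ⟨k, hk⟩ := C.hx (-1) (hm1 C)
  rw [h, one_pow] at hk
  exact hne2 C hk

lemma hxm1 (C : Ctx p) : C.x - 1 ≠ 0 := sub_ne_zero.mpr (hx1 C)

lemma hxi1 (C : Ctx p) : C.x⁻¹ - 1 ≠ 0 := by
  haveI := Fact.mk C.hp
  intro h
  rw [sub_eq_zero, inv_eq_one] at h
  exact hx1 C h

lemma hc0 (C : Ctx p) : C.c0 ≠ 0 := by
  haveI := Fact.mk C.hp
  exact mul_ne_zero C.ha (inv_ne_zero (hxi1 C))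

lemma hd0 (C : Ctx p) : C.d0 ≠ 0 := by
  haveI := Fact.mk C.hp
  exact mul_ne_zero C.hb (inv_ne_zero (hxm1 C))

lemma hxd0 (C : Ctx p) : C.x * C.d0 ≠ 0 := by
  haveI := Fact.mk C.hp
  exact mul_ne_zero (hx0 C) (hd0 C)

lemma idc (C : Ctx p) : C.x * (C.a + C.c0) = C.c0 := by
  haveI := Fact.mk C.hp
  have h1 := hx0 C
  have h2 := hxi1 C
  have h3 : (1:ZMod p) - C.x ≠ 0 := sub_ne_zero.mpr (Ne.symm (hx1 C))
  simp only [Ctx.c0]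
  field_simp
  ring

lemma idd (C : Ctx p) : C.b + C.d0 = C.x * C.d0 := by
  haveI := Fact.mk C.hp
  have h2 := hxm1 C
  simp only [Ctx.d0]
  field_simp
  ring

lemma hbd0 (C : Ctx p) : C.b + C.d0 ≠ 0 := by
  rw [idd]; exact hxd0 C

lemma hxc (C : Ctx p) : C.x * C.a ≠ C.c0 := by
  haveI := Fact.mk C.hp
  intro h
  have h2 := idc C
  have h3 : C.x * C.c0 = 0 := by linear_combination h2 - h
  exact mul_ne_zero (hx0 C) (hc0 C) h3

lemma hmbd0 (C : Ctx p) : -C.b ≠ C.d0 := by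
  intro h
  exact hbd0 C (by rw [← h]; ring)

lemma hxp1 (C : Ctx p) : C.x ^ (p - 1) = 1 := by
  haveI := Fact.mk C.hp
  exact ZMod.pow_card_sub_one_eq_one (hx0 C)

lemma hord (C : Ctx p) : ∀ i j : ℕ, i < p - 1 → j < p - 1 → C.x ^ i = C.x ^ j → i = j := by
  haveI := Fact.mk C.hp
  have horder : orderOf (Units.mk0 C.x (hx0 C)) = p - 1 := by
    have hmem : ∀ w : (ZMod p)ˣ, w ∈ Subgroup.zpowers (Units.mk0 C.x (hx0 C)) := by
      intro w
      obtain ⟨k, hk⟩ := C.hx w.val w.ne_zero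
      refine ⟨(k : ℤ), ?_⟩
      ext
      push_cast
      simpa using hk
    have h := orderOf_eq_card_of_forall_mem_zpowers hmem
    rw [h, Nat.card_eq_fintype_card, ZMod.card_units]
  intro i j hi hj hij
  have hu : (Units.mk0 C.x (hx0 C)) ^ i = (Units.mk0 C.x (hx0 C)) ^ j := by
    ext; push_cast; simpa using hij
  have h2 := pow_eq_pow_iff_modEq.mp hu
  rw [horder] at h2
  have h1 : i % (p-1) = j % (p-1) := h2
  rwa [Nat.mod_eq_of_lt hi, Nat.mod_eq_of_lt hj] at h1

lemma hxpow_ne_one (C : Ctx p) : ∀ i : ℕ, 0 < i → i < p - 1 → C.x ^ i ≠ 1 := by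
  intro i h0 hi hcon
  have h2 : (0:ℕ) < p - 1 := lt_of_le_of_lt (Nat.zero_le i) hi
  have := hord C i 0 hi h2 (by simpa using hcon)
  omega

lemma hlog (C : Ctx p) : ∀ z : ZMod p, z ≠ 0 → ∃ k : ℕ, k < p - 1 ∧ C.x ^ k = z := by
  haveI := Fact.mk C.hp
  intro z hz
  obtain ⟨k, hk⟩ := C.hx z hz
  have hp1 : 0 < p - 1 := by have := C.hp.two_le; omega
  refine ⟨k % (p-1), Nat.mod_lt _ hp1, ?_⟩
  conv_rhs => rw [← hk, ← Nat.div_add_mod k (p-1)]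
  rw [pow_add, pow_mul, hxp1, one_pow, one_mul]

lemma hnsq (C : Ctx p) : ¬ IsSquare C.x := by
  haveI := Fact.mk C.hp
  rintro ⟨s, hs⟩
  have hchar : ringChar (ZMod p) ≠ 2 := by
    rw [ZMod.ringChar_zmod_n]
    rcases C.hodd with ⟨k, hk⟩; omega
  obtain ⟨z, hz⟩ := FiniteField.exists_nonsquare hchar
  have hz0 : z ≠ 0 := by rintro rfl; exact hz ⟨0, by ring⟩
  obtain ⟨k, hk⟩ := C.hx z hz0
  exact hz ⟨s ^ k, by rw [← hk, hs, mul_pow]⟩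

lemma heps (C : Ctx p) : C.eps ≠ 0 := by
  haveI := Fact.mk C.hp
  exact mul_ne_zero (mul_ne_zero (hx0 C) C.hb) (inv_ne_zero (hc0 C))

lemma del_eq (C : Ctx p) : C.del = (C.x - 1) * (C.x * C.b ^ 2 - C.a ^ 2) * (C.x * C.a * C.b)⁻¹ := by
  haveI := Fact.mk C.hp
  have h1 := hx0 C
  have h2 := hxi1 C
  have h3 := hxm1 C
  have ha := C.ha
  have hb := C.hb
  simp only [Ctx.del, Ctx.eps, Ctx.c0, Ctx.d0]
  field_simp
  ring

lemma hdel (C : Ctx p) : C.del ≠ 0 := by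
  haveI := Fact.mk C.hp
  intro h
  rw [del_eq] at h
  rcases mul_eq_zero.mp h with h' | h'
  · rcases mul_eq_zero.mp h' with h'' | h''
    · exact hxm1 C h''
    · apply hnsq C
      have hx2 : C.x * C.b ^ 2 = C.a ^ 2 := by linear_combination h''
      refine ⟨C.a * C.b⁻¹, ?_⟩
      have hb := C.hb
      field_simp
      linear_combination hx2
  · exact inv_ne_zero (mul_ne_zero (mul_ne_zero (hx0 C) C.ha) C.hb) h'

lemma hdeleps (C : Ctx p) : C.del + C.eps = -C.a * (C.x * C.d0)⁻¹ := by
  simp only [Ctx.del]; ring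

lemma hdeleps0 (C : Ctx p) : C.del + C.eps ≠ 0 := by
  haveI := Fact.mk C.hp
  rw [hdeleps]
  exact mul_ne_zero (neg_ne_zero.mpr C.ha) (inv_ne_zero (hxd0 C))

/- branch lemmas -/
lemma fGen (C : Ctx p) (c d : ZMod p) (hc : c ≠ 0) (hd : C.b + d ≠ 0) :
    C.f (c, d) = (C.x * (C.a + c), C.x⁻¹ * (C.b + d)) := by
  simp [Ctx.f, piInvPiab, piab, hc, hd]

lemma fA (C : Ctx p) (d : ZMod p) (hd : C.a + C.b + d ≠ 0) :
    C.f (0, d) = (C.x * C.a, C.x⁻¹ * (C.a + C.b + d)) := by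
  simp [Ctx.f, piInvPiab, piab, hd]

lemma fB (C : Ctx p) (c d : ZMod p) (hc : c ≠ 0) (hd : C.b + d = 0) :
    C.f (c, d) = (C.x * (C.a + c + C.x * C.b), 0) := by
  simp [Ctx.f, piInvPiab, piab, hc, hd]

lemma fC (C : Ctx p) (d : ZMod p) (hd : C.a + C.b + d = 0) :
    C.f (0, d) = (C.x * (C.a + C.x * C.b), 0) := by
  simp [Ctx.f, piInvPiab, piab, hd]


lemma pA (C : Ctx p) (d : ZMod p) (hd : C.a + C.b + d ≠ 0) :
    piab C.x C.a C.b (0, d) = (C.a, C.a + C.b + d) := by simp [piab, hd]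

lemma pC (C : Ctx p) (d : ZMod p) (hd : C.a + C.b + d = 0) :
    piab C.x C.a C.b (0, d) = (C.a + C.x * C.b, 0) := by simp [piab, hd]

lemma pB (C : Ctx p) (c d : ZMod p) (hc : c ≠ 0) (hd : C.b + d = 0) :
    piab C.x C.a C.b (c, d) = (C.a + c + C.x * C.b, 0) := by simp [piab, hc, hd]

lemma pG (C : Ctx p) (c d : ZMod p) (hc : c ≠ 0) (hd : C.b + d ≠ 0) :
    piab C.x C.a C.b (c, d) = (C.a + c, C.b + d) := by simp [piab, hc, hd]

/-- unique fixed point -/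
lemma ffix (C : Ctx p) : ∀ q : ZMod p × ZMod p, C.f q = q ↔ q = (C.c0, C.d0) := by
  haveI := Fact.mk C.hp
  rintro ⟨c, d⟩
  constructor
  · intro h
    rcases eq_or_ne c 0 with hc | hc
    · subst hc
      rcases eq_or_ne (C.a + C.b + d) 0 with hd | hd
      · rw [fC C d hd, Prod.mk.injEq] at h
        have h1 : C.x * (C.a + C.x * C.b) = 0 := h.1
        have h3 : C.a + C.b = 0 := by rw [← h.2] at hd; simpa using hd
        have h4 : C.a + C.x * C.b = 0 := by
          rcases mul_eq_zero.mp h1 with h' | h'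
          · exact absurd h' (hx0 C)
          · exact h'
        have h5 : (C.x - 1) * C.b = 0 := by linear_combination h4 - h3
        rcases mul_eq_zero.mp h5 with h' | h'
        · exact absurd h' (hxm1 C)
        · exact absurd h' C.hb
      · rw [fA C d hd, Prod.mk.injEq] at h
        exact absurd h.1 (mul_ne_zero (hx0 C) C.ha)
    · rcases eq_or_ne (C.b + d) 0 with hd | hd
      · rw [fB C c d hc hd, Prod.mk.injEq] at h
        have h2 : d = 0 := h.2.symm
        rw [h2, add_zero] at hd
        exact absurd hd C.hb
      · rw [fGen C c d hc hd, Prod.mk.injEq] at h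
        obtain ⟨h1, h2⟩ := h
        have hcc : c = C.c0 := by
          have hz : (C.x - 1) * (c - C.c0) = 0 := by linear_combination h1 - idc C
          rcases mul_eq_zero.mp hz with h' | h'
          · exact absurd h' (hxm1 C)
          · exact sub_eq_zero.mp h'
        have hdd : d = C.d0 := by
          have hgoal : C.x * d = C.b + d := by
            calc C.x * d = C.x * (C.x⁻¹ * (C.b + d)) := by rw [h2]
            _ = C.b + d := by rw [← mul_assoc, mul_inv_cancel₀ (hx0 C), one_mul]
          have hz : (C.x - 1) * (d - C.d0) = 0 := by linear_combination hgoal + idd C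
          rcases mul_eq_zero.mp hz with h' | h'
          · exact absurd h' (hxm1 C)
          · exact sub_eq_zero.mp h'
        rw [hcc, hdd]
  · intro h
    rw [h, fGen C _ _ (hc0 C) (hbd0 C), idc C, idd C, Prod.mk.injEq]
    exact ⟨rfl, by rw [← mul_assoc, inv_mul_cancel₀ (hx0 C), one_mul]⟩

lemma finj (C : Ctx p) : Function.Injective C.f := by
  haveI := Fact.mk C.hp
  have hx0' := hx0 C
  have hxb : C.x * C.b ≠ 0 := mul_ne_zero hx0' C.hb
  have hxi : (C.x)⁻¹ ≠ 0 := inv_ne_zero hx0'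
  rintro ⟨c1, d1⟩ ⟨c2, d2⟩ h
  simp only [Ctx.f, piInvPiab, Prod.mk.injEq] at h
  obtain ⟨h1, h2⟩ := h
  have h1' := mul_left_cancel₀ hx0' h1
  have h2' := mul_left_cancel₀ hxi h2
  have key : piab C.x C.a C.b (c1, d1) = piab C.x C.a C.b (c2, d2) := Prod.ext h1' h2'
  clear h1 h2 h1' h2'
  rcases eq_or_ne c1 0 with rfl | hc1
  · rcases eq_or_ne (C.a + C.b + d1) 0 with e1 | e1
    · -- side1 = C
      rcases eq_or_ne c2 0 with rfl | hc2
      · rcases eq_or_ne (C.a + C.b + d2) 0 with e2 | e2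
        · -- C,C
          have : d1 = d2 := by linear_combination e1 - e2
          rw [this]
        · -- C,A
          rw [pC C d1 e1, pA C d2 e2, Prod.mk.injEq] at key
          have : C.x * C.b = 0 := by linear_combination key.1
          exact absurd this hxb
      · rcases eq_or_ne (C.b + d2) 0 with e2 | e2
        · -- C,B
          rw [pC C d1 e1, pB C c2 d2 hc2 e2, Prod.mk.injEq] at key
          have : c2 = 0 := by linear_combination - key.1
          exact absurd this hc2
        · -- C,G
          rw [pC C d1 e1, pG C c2 d2 hc2 e2, Prod.mk.injEq] at key
          exact absurd key.2.symm e2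
    · -- side1 = A
      rcases eq_or_ne c2 0 with rfl | hc2
      · rcases eq_or_ne (C.a + C.b + d2) 0 with e2 | e2
        · -- A,C
          rw [pA C d1 e1, pC C d2 e2, Prod.mk.injEq] at key
          have : C.x * C.b = 0 := by linear_combination - key.1
          exact absurd this hxb
        · -- A,A
          rw [pA C d1 e1, pA C d2 e2, Prod.mk.injEq] at key
          have : d1 = d2 := by linear_combination key.2
          rw [this]
      · rcases eq_or_ne (C.b + d2) 0 with e2 | e2
        · -- A,B
          rw [pA C d1 e1, pB C c2 d2 hc2 e2, Prod.mk.injEq] at key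
          exact absurd key.2 e1
        · -- A,G
          rw [pA C d1 e1, pG C c2 d2 hc2 e2, Prod.mk.injEq] at key
          have : c2 = 0 := by linear_combination - key.1
          exact absurd this hc2
  · rcases eq_or_ne (C.b + d1) 0 with e1 | e1
    · -- side1 = B
      rcases eq_or_ne c2 0 with rfl | hc2
      · rcases eq_or_ne (C.a + C.b + d2) 0 with e2 | e2
        · -- B,C
          rw [pB C c1 d1 hc1 e1, pC C d2 e2, Prod.mk.injEq] at key
          have : c1 = 0 := by linear_combination key.1
          exact absurd this hc1
        · -- B,A
          rw [pB C c1 d1 hc1 e1, pA C d2 e2, Prod.mk.injEq] at key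
          exact absurd key.2.symm e2
      · rcases eq_or_ne (C.b + d2) 0 with e2 | e2
        · -- B,B
          rw [pB C c1 d1 hc1 e1, pB C c2 d2 hc2 e2, Prod.mk.injEq] at key
          have hcc : c1 = c2 := by linear_combination key.1
          have hdd : d1 = d2 := by linear_combination e1 - e2
          rw [hcc, hdd]
        · -- B,G
          rw [pB C c1 d1 hc1 e1, pG C c2 d2 hc2 e2, Prod.mk.injEq] at key
          exact absurd key.2.symm e2
    · -- side1 = G
      rcases eq_or_ne c2 0 with rfl | hc2
      · rcases eq_or_ne (C.a + C.b + d2) 0 with e2 | e2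
        · -- G,C
          rw [pG C c1 d1 hc1 e1, pC C d2 e2, Prod.mk.injEq] at key
          exact absurd key.2 e1
        · -- G,A
          rw [pG C c1 d1 hc1 e1, pA C d2 e2, Prod.mk.injEq] at key
          have : c1 = 0 := by linear_combination key.1
          exact absurd this hc1
      · rcases eq_or_ne (C.b + d2) 0 with e2 | e2
        · -- G,B
          rw [pG C c1 d1 hc1 e1, pB C c2 d2 hc2 e2, Prod.mk.injEq] at key
          exact absurd key.2 e1
        · -- G,G
          rw [pG C c1 d1 hc1 e1, pG C c2 d2 hc2 e2, Prod.mk.injEq] at key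
          have hcc : c1 = c2 := by linear_combination key.1
          have hdd : d1 = d2 := by linear_combination key.2
          rw [hcc, hdd]

/-- a positive period for `C.f` -/
lemma fper (C : Ctx p) : ∃ N : ℕ, 0 < N ∧ ∀ q, C.f^[N] q = q := by
  haveI := Fact.mk C.hp
  haveI : NeZero p := ⟨C.hp.pos.ne'⟩
  have hbij : Function.Bijective C.f := Finite.injective_iff_bijective.mp (finj C)
  set e : Equiv.Perm (ZMod p × ZMod p) := Equiv.ofBijective _ hbij with he
  have key : ∀ (n : ℕ) (q), (e ^ n) q = C.f^[n] q := by
    intro n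
    induction n with
    | zero => intro q; rfl
    | succ n ih =>
      intro q
      rw [pow_succ, Equiv.Perm.mul_apply, Function.iterate_succ_apply]
      exact ih (e q)
  refine ⟨orderOf e, orderOf_pos e, fun q => ?_⟩
  rw [← key, pow_orderOf_eq_one]
  rfl

/- orbit lemmas -/
lemma orbit_self {α : Type*} (f : α → α) (q : α) : q ∈ orbit f q := ⟨0, rfl⟩

lemma orbit_iterate {α : Type*} (f : α → α) (q : α) (k : ℕ) : f^[k] q ∈ orbit f q := ⟨k, rfl⟩

lemma orbit_subset {α : Type*} (f : α → α) {q z : α} (h : z ∈ orbit f q) :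
    orbit f z ⊆ orbit f q := by
  obtain ⟨k, hk⟩ := h
  rintro w ⟨m, hm⟩
  exact ⟨m + k, by rw [Function.iterate_add_apply, hk, hm]⟩

lemma orbit_eq {α : Type*} (f : α → α) (N : ℕ) (hN : 0 < N) (hper : ∀ z, f^[N] z = z)
    {q z : α} (h : z ∈ orbit f q) : orbit f q = orbit f z := by
  have hper' : ∀ (s : ℕ) (w : α), f^[N * s] w = w := by
    intro s
    induction s with
    | zero => intro w; rfl
    | succ s ih =>
      intro w
      have : N * (s + 1) = N * s + N := by ring
      rw [this, Function.iterate_add_apply, hper]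
      exact ih w
  obtain ⟨k, hk⟩ := h
  refine subset_antisymm ?_ (orbit_subset f ⟨k, hk⟩)
  have hq : q ∈ orbit f z := by
    refine ⟨N * (k + 1) - k, ?_⟩
    rw [← hk, ← Function.iterate_add_apply]
    have hge : k ≤ N * (k + 1) := by nlinarith
    rw [Nat.sub_add_cancel hge]
    exact hper' (k+1) q
  exact orbit_subset f hq

lemma orbit_fixed_eq {α : Type*} (f : α → α) (q : α) (h : f q = q) : orbit f q = {q} := by
  ext w
  constructor
  · rintro ⟨k, hk⟩
    rw [Function.iterate_fixed h] at hk
    exact hk ▸ rfl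
  · intro hw
    rw [Set.mem_singleton_iff] at hw
    rw [hw]
    exact orbit_self f q

lemma two_le_orbit {α : Type*} [Finite α] (f : α → α) (q : α) (h : f q ≠ q) :
    2 ≤ (orbit f q).ncard := by
  have hsub : ({q, f q} : Set α) ⊆ orbit f q := by
    intro w hw
    simp only [Set.mem_insert_iff, Set.mem_singleton_iff] at hw
    rcases hw with h | h
    · rw [h]; exact orbit_self f q
    · rw [h]; exact ⟨1, by simp⟩
  calc 2 = ({q, f q} : Set α).ncard := (Set.ncard_pair (Ne.symm h)).symm
  _ ≤ (orbit f q).ncard := Set.ncard_le_ncard hsub (Set.toFinite _)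

lemma nofix (C : Ctx p) : ∀ (k : ℕ) (q : ZMod p × ZMod p),
    C.f^[k] q = (C.c0, C.d0) → q = (C.c0, C.d0) := by
  intro k
  induction k with
  | zero => intro q h; exact h
  | succ k ih =>
    intro q h
    rw [Function.iterate_succ_apply] at h
    have h2 := ih _ h
    have hfix : C.f (C.c0, C.d0) = (C.c0, C.d0) := (ffix C _).mpr rfl
    exact finj C (h2.trans hfix.symm)



lemma xinvx (C : Ctx p) (z : ZMod p) : C.x⁻¹ * (C.x * z) = z := by
  haveI := Fact.mk C.hp
  rw [← mul_assoc, inv_mul_cancel₀ (hx0 C), one_mul]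

/-- Phase 2: from a point `(c0+u0, 0)` the map flows generically back to the line `c = 0`. -/
lemma ph2 (C : Ctx p) (u0 : ZMod p) (hu : u0 ≠ 0) (j : ℕ) (hj : j < p - 1)
    (hxj : C.x ^ j * u0 = -C.c0) :
    ∀ i, i ≤ j →
      C.f^[i] (C.c0 + u0, 0) = (C.c0 + C.x ^ i * u0, C.d0 - C.d0 * C.x ^ (p - 1 - i)) := by
  haveI := Fact.mk C.hp
  have hp2 := C.hp.two_le
  intro i
  induction i with
  | zero =>
    intro _
    rw [Function.iterate_zero_apply, Nat.sub_zero, hxp1 C, pow_zero, one_mul, mul_one, sub_self]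
  | succ i ih =>
    intro hij
    have hi : i ≤ j := Nat.le_of_succ_le hij
    rw [Function.iterate_succ_apply', ih hi]
    have hcne : C.c0 + C.x ^ i * u0 ≠ 0 := by
      intro h
      have h1 : C.x ^ i * u0 = C.x ^ j * u0 := by rw [hxj]; linear_combination h
      have h2 : C.x ^ i = C.x ^ j := mul_right_cancel₀ hu h1
      have := hord C i j (lt_of_le_of_lt hi hj) hj h2
      omega
    have hdkey : C.b + (C.d0 - C.d0 * C.x ^ (p - 1 - i)) =
        C.x * (C.d0 - C.d0 * C.x ^ (p - 1 - (i+1))) := by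
      have hsplit : C.x ^ (p - 1 - i) = C.x * C.x ^ (p - 1 - (i+1)) := by
        rw [← pow_succ']
        congr 1
        omega
      rw [hsplit]
      linear_combination idd C
    have hdne : C.b + (C.d0 - C.d0 * C.x ^ (p - 1 - i)) ≠ 0 := by
      rw [hdkey]
      intro h
      rcases mul_eq_zero.mp h with h' | h'
      · exact hx0 C h'
      · have h1 : C.x ^ (p - 1 - (i+1)) = 1 := by
          have hz : C.d0 * (1 - C.x ^ (p - 1 - (i+1))) = 0 := by linear_combination h'
          rcases mul_eq_zero.mp hz with h'' | h''
          · exact absurd h'' (hd0 C)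
          · linear_combination -h''
        have h2 : p - 1 - (i+1) = 0 := by
          by_contra hcon
          exact hxpow_ne_one C _ (Nat.pos_of_ne_zero hcon) (by omega) h1
        -- then i + 1 = p - 1, but i + 1 ≤ j < p - 1
        omega
    rw [fGen C _ _ hcne hdne, hdkey, xinvx C, Prod.mk.injEq]
    refine ⟨?_, rfl⟩
    rw [pow_succ]
    linear_combination idc C


lemma Tval (C : Ctx p) (d : ZMod p) (k : ℕ) (ht : C.x ^ k = C.T d) :
    d = C.d0 - C.a - C.x ^ (k+1) * C.d0 := by
  haveI := Fact.mk C.hp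
  have hxd := hxd0 C
  have hmul : C.x ^ k * (C.x * C.d0) = -(d + C.a - C.d0) := by
    rw [ht, Ctx.T]
    rw [mul_assoc, inv_mul_cancel₀ hxd, mul_one]
  have hp' : C.x ^ (k+1) = C.x * C.x ^ k := pow_succ' C.x k
  rw [hp']
  linear_combination hmul

lemma habd (C : Ctx p) (d : ZMod p) (k : ℕ) (ht : C.x ^ k = C.T d) :
    C.a + C.b + d = C.x * (C.d0 * (1 - C.x ^ k)) := by
  haveI := Fact.mk C.hp
  have h1 := Tval C d k ht
  have hp' : C.x ^ (k+1) = C.x * C.x ^ k := pow_succ' C.x k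
  rw [h1, hp']
  linear_combination idd C

lemma ph1traj (C : Ctx p) (d : ZMod p) (k : ℕ) (hk : k < p - 1) (ht : C.x ^ k = C.T d) :
    ∀ i, 1 ≤ i → i ≤ k →
      C.f^[i] (0, d) = (C.c0 * (1 - C.x ^ i), C.d0 * (1 - C.x ^ (k + 1 - i))) := by
  haveI := Fact.mk C.hp
  intro i
  induction i with
  | zero => intro h; omega
  | succ i ih =>
    intro _ hik
    rcases Nat.eq_zero_or_pos i with rfl | hi1
    · -- base case i+1 = 1
      have hk1 : 1 ≤ k := hik
      have habd' := habd C d k ht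
      have hxk1 : C.x ^ k ≠ 1 := hxpow_ne_one C k hk1 hk
      have hne : C.a + C.b + d ≠ 0 := by
        rw [habd']
        intro h
        rcases mul_eq_zero.mp h with h' | h'
        · exact hx0 C h'
        · rcases mul_eq_zero.mp h' with h'' | h''
          · exact hd0 C h''
          · exact hxk1 (by linear_combination -h'')
      rw [Function.iterate_one, fA C d hne, habd', xinvx C, Prod.mk.injEq]
      constructor
      · rw [pow_one]
        linear_combination idc C
      · have : k + 1 - 1 = k := by omega
        rw [this]
    · -- inductive step
      have hik' : i ≤ k := Nat.le_of_succ_le hik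
      have hi1' : 1 ≤ i := hi1
      rw [Function.iterate_succ_apply', ih hi1' hik']
      have hxi1 : C.x ^ i ≠ 1 := hxpow_ne_one C i hi1 (by omega)
      have hcne : C.c0 * (1 - C.x ^ i) ≠ 0 := by
        intro h
        rcases mul_eq_zero.mp h with h' | h'
        · exact hc0 C h'
        · exact hxi1 (by linear_combination -h')
      have hsplit : C.x ^ (k + 1 - i) = C.x * C.x ^ (k - i) := by
        rw [← pow_succ']
        congr 1
        omega
      have hdkey : C.b + C.d0 * (1 - C.x ^ (k + 1 - i)) =
          C.x * (C.d0 * (1 - C.x ^ (k - i))) := by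
        rw [hsplit]
        linear_combination idd C
      have hxki : C.x ^ (k - i) ≠ 1 := hxpow_ne_one C (k - i) (by omega) (by omega)
      have hdne : C.b + C.d0 * (1 - C.x ^ (k + 1 - i)) ≠ 0 := by
        rw [hdkey]
        intro h
        rcases mul_eq_zero.mp h with h' | h'
        · exact hx0 C h'
        · rcases mul_eq_zero.mp h' with h'' | h''
          · exact hd0 C h''
          · exact hxki (by linear_combination -h'')
      rw [fGen C _ _ hcne hdne, hdkey, xinvx C, Prod.mk.injEq]
      constructor
      · rw [pow_succ']
        linear_combination idc C
      · have : k + 1 - (i + 1) = k - i := by omega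
        rw [this]

lemma ph1 (C : Ctx p) (d : ZMod p) (k : ℕ) (hk : k < p - 1) (ht : C.x ^ k = C.T d) :
    C.f^[k+1] (0, d) = (C.c0 + C.x * (C.x * C.b - C.T d * C.c0), 0) ∧
    ∀ i, i ≤ k → (C.f^[i] (0, d)).1 ≠ C.c0 := by
  haveI := Fact.mk C.hp
  constructor
  · rcases Nat.eq_zero_or_pos k with rfl | hk1
    · -- C event
      have habd' := habd C d 0 ht
      have hC : C.a + C.b + d = 0 := by rw [habd']; simp
      rw [Function.iterate_one, fC C d hC, ← ht, pow_zero, Prod.mk.injEq]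
      refine ⟨?_, rfl⟩
      linear_combination idc C
    · -- B event after excursion
      have htraj := ph1traj C d k hk ht k hk1 le_rfl
      rw [Function.iterate_succ_apply', htraj]
      have hsub : k + 1 - k = 1 := by omega
      have hxk1 : C.x ^ k ≠ 1 := hxpow_ne_one C k hk1 hk
      have hcne : C.c0 * (1 - C.x ^ k) ≠ 0 := by
        intro h
        rcases mul_eq_zero.mp h with h' | h'
        · exact hc0 C h'
        · exact hxk1 (by linear_combination -h')
      have hbz : C.b + C.d0 * (1 - C.x ^ (k + 1 - k)) = 0 := by
        rw [hsub, pow_one]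
        linear_combination idd C
      rw [fB C _ _ hcne hbz, ← ht, Prod.mk.injEq]
      refine ⟨?_, rfl⟩
      linear_combination idc C
  · intro i hik
    rcases Nat.eq_zero_or_pos i with rfl | hi1
    · rw [Function.iterate_zero_apply]
      exact fun h => hc0 C h.symm
    · rw [ph1traj C d k hk ht i hi1 hik]
      intro h
      simp only at h
      have : C.c0 * C.x ^ i = 0 := by linear_combination -h
      exact mul_ne_zero (hc0 C) (pow_ne_zero i (hx0 C)) this



lemma step (C : Ctx p) (d : ZMod p) (ht0 : C.T d ≠ 0) (hte : C.T d ≠ C.eps) :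
    ∃ (m : ℕ) (d' : ZMod p), 1 ≤ m ∧ C.f^[m] (0, d) = (0, d') ∧ C.T d' = C.T d + C.del ∧
      ∀ i, i ≤ m → (C.f^[i] (0, d)).1 ≠ C.c0 := by
  haveI := Fact.mk C.hp
  have hp2 := C.hp.two_le
  obtain ⟨k, hk, hxk⟩ := hlog C (C.T d) ht0
  obtain ⟨h1, h2⟩ := ph1 C d k hk hxk
  set t := C.T d with htdef
  set u' : ZMod p := C.x * (C.x * C.b - t * C.c0) with hu'def
  have hu' : u' ≠ 0 := by
    rw [hu'def]
    intro h
    rcases mul_eq_zero.mp h with h' | h'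
    · exact hx0 C h'
    · apply hte
      have htc : t * C.c0 = C.x * C.b := by linear_combination -h'
      rw [htdef, Ctx.eps]
      field_simp [hc0 C]
      linear_combination htc
  have hlu : -C.c0 * u'⁻¹ ≠ 0 :=
    mul_ne_zero (neg_ne_zero.mpr (hc0 C)) (inv_ne_zero hu')
  obtain ⟨j, hj, hxj⟩ := hlog C (-C.c0 * u'⁻¹) hlu
  have hxj' : C.x ^ j * u' = -C.c0 := by
    rw [hxj]
    field_simp
  have htraj := ph2 C u' hu' j hj hxj'
  have hend := htraj j le_rfl
  have hend0 : C.c0 + C.x ^ j * u' = 0 := by rw [hxj']; ring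
  set d' : ZMod p := C.d0 - C.d0 * C.x ^ (p - 1 - j) with hd'def
  refine ⟨j + (k + 1), d', by omega, ?_, ?_, ?_⟩
  · rw [Function.iterate_add_apply, h1, hend, hend0]
  · -- T advance computation
    have e1 : C.x ^ (j+1) * (C.x * C.b - t * C.c0) = -C.c0 := by
      rw [pow_succ']
      linear_combination hxj'
    have e3 : C.x ^ (p - 2 - j) * C.x ^ (j+1) = 1 := by
      rw [← pow_add]
      have hsum : p - 2 - j + (j + 1) = p - 1 := by omega
      rw [hsum, hxp1 C]
    have hrel : C.x * C.b - t * C.c0 = -(C.c0 * C.x ^ (p - 2 - j)) := by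
      have e2 : C.x ^ (p-2-j) * (C.x ^ (j+1) * (C.x * C.b - t * C.c0))
          = C.x ^ (p-2-j) * (-C.c0) := by rw [e1]
      linear_combination e2 - (C.x * C.b - t * C.c0) * e3
    have hsplit : C.x ^ (p - 1 - j) = C.x * C.x ^ (p - 2 - j) := by
      rw [← pow_succ']
      congr 1
      omega
    rw [hd'def]
    simp only [Ctx.T, Ctx.del, Ctx.eps]
    rw [hsplit]
    have hxd := hxd0 C
    have hcz := hc0 C
    have hx0' := hx0 C
    have hd0' := hd0 C
    field_simp
    linear_combination (C.d0 * C.x) * hrel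
  · intro i hi
    rcases Nat.lt_or_ge i (k + 1) with hik | hik
    · exact h2 i (by omega)
    · have hieq : i = (i - (k+1)) + (k+1) := by omega
      rw [hieq, Function.iterate_add_apply, h1, htraj (i - (k+1)) (by omega)]
      intro hcon
      simp only at hcon
      have : C.x ^ (i - (k+1)) * u' = 0 := by linear_combination hcon
      exact mul_ne_zero (pow_ne_zero _ (hx0 C)) hu' this

lemma stepEps (C : Ctx p) (d : ZMod p) (hte : C.T d = C.eps) :
    ∃ m, (C.f^[m] (0, d)).1 = C.c0 := by
  haveI := Fact.mk C.hp
  have ht0 : C.T d ≠ 0 := by rw [hte]; exact heps C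
  obtain ⟨k, hk, hxk⟩ := hlog C (C.T d) ht0
  obtain ⟨h1, _⟩ := ph1 C d k hk hxk
  refine ⟨k + 1, ?_⟩
  rw [h1]
  have hz : C.x * C.b - C.T d * C.c0 = 0 := by
    rw [hte, Ctx.eps]
    field_simp [hc0 C]
    ring
  rw [hz]
  simp

lemma chain (C : Ctx p) : ∀ n : ℕ, ∀ d : ZMod p, ((n : ZMod p) = -(C.T d) * C.del⁻¹) →
    ∃ m, (C.f^[m] (0, d)).2 = C.d0 ∨ (C.f^[m] (0, d)).1 = C.c0 := by
  haveI := Fact.mk C.hp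
  intro n
  induction n using Nat.strong_induction_on with
  | _ n ih =>
    intro d hn
    rcases eq_or_ne (C.T d) 0 with ht0 | ht0
    · -- exits to horizontal line in one step
      have hd : d = C.d0 - C.a := by
        have h' : -(d + C.a - C.d0) * (C.x * C.d0)⁻¹ = 0 := ht0
        rcases mul_eq_zero.mp h' with h'' | h''
        · linear_combination -h''
        · exact absurd h'' (inv_ne_zero (hxd0 C))
      have habd' : C.a + C.b + d = C.x * C.d0 := by
        rw [hd]
        linear_combination idd C
      have hne : C.a + C.b + d ≠ 0 := by rw [habd']; exact hxd0 C
      refine ⟨1, Or.inl ?_⟩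
      rw [Function.iterate_one, fA C d hne, habd', xinvx C]
    · rcases eq_or_ne (C.T d) C.eps with hte | hte
      · obtain ⟨m, hm⟩ := stepEps C d hte
        exact ⟨m, Or.inr hm⟩
      · have hn0 : n ≠ 0 := by
          rintro rfl
          apply ht0
          have h0 : -(C.T d) * C.del⁻¹ = 0 := by rw [← hn]; simp
          rcases mul_eq_zero.mp h0 with h' | h'
          · linear_combination -h'
          · exact absurd h' (inv_ne_zero (hdel C))
        obtain ⟨m₁, d', hm₁, heq, hT', _⟩ := step C d ht0 hte
        have hn' : ((n - 1 : ℕ) : ZMod p) = -(C.T d') * C.del⁻¹ := by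
          have hcast : ((n - 1 : ℕ) : ZMod p) = (n : ZMod p) - 1 := by
            have : (1:ℕ) ≤ n := Nat.pos_of_ne_zero hn0
            push_cast [Nat.cast_sub this]
            ring
          rw [hcast, hn, hT']
          have hdz := hdel C
          field_simp
          ring
        obtain ⟨m₂, hm₂⟩ := ih (n - 1) (by omega) d' hn'
        refine ⟨m₂ + m₁, ?_⟩
        rw [Function.iterate_add_apply, heq]
        exact hm₂



lemma chainStrong (C : Ctx p) : ∀ n : ℕ, ∀ d : ZMod p,
    ((n : ZMod p) = -(C.T d) * C.del⁻¹) →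
    (∀ j : ℕ, j ≤ n → C.T d + (j : ZMod p) * C.del ≠ C.eps) →
    ∃ m, 1 ≤ m ∧ (C.f^[m] (0, d)).2 = C.d0 ∧ ∀ i, i ≤ m → (C.f^[i] (0, d)).1 ≠ C.c0 := by
  haveI := Fact.mk C.hp
  intro n
  induction n using Nat.strong_induction_on with
  | _ n ih =>
    intro d hn hjs
    rcases eq_or_ne (C.T d) 0 with ht0 | ht0
    · have hd : d = C.d0 - C.a := by
        have h' : -(d + C.a - C.d0) * (C.x * C.d0)⁻¹ = 0 := ht0
        rcases mul_eq_zero.mp h' with h'' | h''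
        · linear_combination -h''
        · exact absurd h'' (inv_ne_zero (hxd0 C))
      have habd' : C.a + C.b + d = C.x * C.d0 := by
        rw [hd]
        linear_combination idd C
      have hne : C.a + C.b + d ≠ 0 := by rw [habd']; exact hxd0 C
      refine ⟨1, le_rfl, ?_, ?_⟩
      · rw [Function.iterate_one, fA C d hne, habd', xinvx C]
      · intro i hi
        interval_cases i
        · exact fun h => hc0 C h.symm
        · rw [Function.iterate_one, fA C d hne]
          exact hxc C
    · have hte : C.T d ≠ C.eps := by
        have := hjs 0 (Nat.zero_le n)
        simpa using this
      have hn0 : n ≠ 0 := by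
        rintro rfl
        apply ht0
        have h0 : -(C.T d) * C.del⁻¹ = 0 := by rw [← hn]; simp
        rcases mul_eq_zero.mp h0 with h' | h'
        · linear_combination -h'
        · exact absurd h' (inv_ne_zero (hdel C))
      obtain ⟨m₁, d', hm₁, heq, hT', havoid₁⟩ := step C d ht0 hte
      have hn' : ((n - 1 : ℕ) : ZMod p) = -(C.T d') * C.del⁻¹ := by
        have hgn : (1:ℕ) ≤ n := Nat.pos_of_ne_zero hn0
        have hcast : ((n - 1 : ℕ) : ZMod p) = (n : ZMod p) - 1 := by
          push_cast [Nat.cast_sub hgn]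
          ring
        rw [hcast, hn, hT']
        have hdz := hdel C
        field_simp
        ring
      have hjs' : ∀ j : ℕ, j ≤ n - 1 → C.T d' + (j : ZMod p) * C.del ≠ C.eps := by
        intro j hj
        rw [hT']
        have := hjs (j + 1) (by omega)
        intro hcon
        apply this
        rw [← hcon]
        push_cast
        ring
      obtain ⟨m₂, hm₂1, hm₂2, havoid₂⟩ := ih (n - 1) (by omega) d' hn' hjs'
      refine ⟨m₂ + m₁, by omega, ?_, ?_⟩
      · rw [Function.iterate_add_apply, heq]
        exact hm₂2
      · intro i hi
        rcases le_or_gt i m₁ with hile | hile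
        · exact havoid₁ i hile
        · have hieq : i = (i - m₁) + m₁ := by omega
          rw [hieq, Function.iterate_add_apply, heq]
          exact havoid₂ (i - m₁) (by omega)

/-- from any point on the line c = 0 we reach one of the two special lines -/
lemma H1 (C : Ctx p) (d : ZMod p) :
    ∃ m, (C.f^[m] (0, d)).2 = C.d0 ∨ (C.f^[m] (0, d)).1 = C.c0 := by
  haveI := Fact.mk C.hp
  haveI : NeZero p := ⟨C.hp.pos.ne'⟩
  exact chain C (-(C.T d) * C.del⁻¹).val d (ZMod.natCast_rightInverse _)

/-- from any point on the line d-coordinate 0 with c ≠ c0, we reach one of the two lines -/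
lemma H2 (C : Ctx p) (c : ZMod p) (hc : c ≠ C.c0) :
    ∃ m, (C.f^[m] (c, 0)).2 = C.d0 ∨ (C.f^[m] (c, 0)).1 = C.c0 := by
  haveI := Fact.mk C.hp
  have hu : c - C.c0 ≠ 0 := sub_ne_zero.mpr hc
  have hlu : -C.c0 * (c - C.c0)⁻¹ ≠ 0 :=
    mul_ne_zero (neg_ne_zero.mpr (hc0 C)) (inv_ne_zero hu)
  obtain ⟨j, hj, hxj⟩ := hlog C _ hlu
  have hxj' : C.x ^ j * (c - C.c0) = -C.c0 := by
    rw [hxj]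
    field_simp
  have hpoint : (c, (0 : ZMod p)) = (C.c0 + (c - C.c0), 0) := by
    rw [Prod.mk.injEq]
    exact ⟨by ring, rfl⟩
  have hend := ph2 C (c - C.c0) hu j hj hxj' j le_rfl
  have hend0 : C.c0 + C.x ^ j * (c - C.c0) = 0 := by rw [hxj']; ring
  obtain ⟨m, hm⟩ := H1 C (C.d0 - C.d0 * C.x ^ (p - 1 - j))
  refine ⟨m + j, ?_⟩
  rw [hpoint, Function.iterate_add_apply, hend, hend0]
  exact hm

/-- generic reachability -/
lemma gen (C : Ctx p) : ∀ n : ℕ, ∀ c d : ZMod p, c ≠ 0 → c ≠ C.c0 →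
    C.x ^ n * (c - C.c0) = -C.c0 →
    ∃ m, (C.f^[m] (c, d)).2 = C.d0 ∨ (C.f^[m] (c, d)).1 = C.c0 := by
  haveI := Fact.mk C.hp
  intro n
  induction n using Nat.strong_induction_on with
  | _ n ih =>
    intro c d hc hcc hxn
    have hn0 : n ≠ 0 := by
      rintro rfl
      rw [pow_zero, one_mul] at hxn
      apply hc
      linear_combination hxn
    rcases eq_or_ne d C.d0 with rfl | hd
    · exact ⟨0, Or.inl rfl⟩
    · rcases eq_or_ne (C.b + d) 0 with hbd | hbd
      · -- B event
        have hstep := fB C c d hc hbd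
        rcases eq_or_ne (C.x * (C.a + c + C.x * C.b)) C.c0 with he | he
        · refine ⟨1, Or.inr ?_⟩
          rw [Function.iterate_one, hstep]
          exact he
        · obtain ⟨m, hm⟩ := H2 C _ he
          refine ⟨m + 1, ?_⟩
          rw [Function.iterate_add_apply, Function.iterate_one, hstep]
          exact hm
      · -- generic step
        have hstep := fGen C c d hc hbd
        set c' := C.x * (C.a + c) with hc'def
        have hc'c0 : c' - C.c0 = C.x * (c - C.c0) := by
          rw [hc'def]
          linear_combination idc C
        have hc'ne : c' ≠ C.c0 := by
          intro h
          have : C.x * (c - C.c0) = 0 := by rw [← hc'c0, h]; ring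
          rcases mul_eq_zero.mp this with h' | h'
          · exact hx0 C h'
          · exact hcc (by linear_combination h')
        rcases eq_or_ne c' 0 with hc'0 | hc'0
        · -- lands on c = 0
          obtain ⟨m, hm⟩ := H1 C (C.x⁻¹ * (C.b + d))
          refine ⟨m + 1, ?_⟩
          rw [Function.iterate_add_apply, Function.iterate_one, hstep, hc'0]
          exact hm
        · -- recurse
          have hxn' : C.x ^ (n - 1) * (c' - C.c0) = -C.c0 := by
            rw [hc'c0, ← mul_assoc, ← pow_succ]
            have : n - 1 + 1 = n := by omega
            rw [this]
            exact hxn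
          obtain ⟨m, hm⟩ := ih (n - 1) (by omega) c' (C.x⁻¹ * (C.b + d)) hc'0 hc'ne hxn'
          refine ⟨m + 1, ?_⟩
          rw [Function.iterate_add_apply, Function.iterate_one, hstep]
          exact hm

/-- every point reaches one of the two special lines -/
lemma T3 (C : Ctx p) (q : ZMod p × ZMod p) :
    ∃ m, (C.f^[m] q).2 = C.d0 ∨ (C.f^[m] q).1 = C.c0 := by
  haveI := Fact.mk C.hp
  obtain ⟨c, d⟩ := q
  rcases eq_or_ne c C.c0 with rfl | hcc
  · exact ⟨0, Or.inr rfl⟩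
  · rcases eq_or_ne c 0 with rfl | hc
    · exact H1 C d
    · have hu : c - C.c0 ≠ 0 := sub_ne_zero.mpr hcc
      have hlu : -C.c0 * (c - C.c0)⁻¹ ≠ 0 :=
        mul_ne_zero (neg_ne_zero.mpr (hc0 C)) (inv_ne_zero hu)
      obtain ⟨n, hn, hxn⟩ := hlog C _ hlu
      have hxn' : C.x ^ n * (c - C.c0) = -C.c0 := by
        rw [hxn]
        field_simp
      exact gen C n c d hc hcc hxn'



/-- flow along the horizontal line to (0, d0), avoiding c0 -/
lemma T1aux (C : Ctx p) : ∀ n : ℕ, n < p - 1 → ∀ c : ZMod p, c ≠ C.c0 →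
    C.x ^ n * (c - C.c0) = -C.c0 →
    ∃ m, C.f^[m] (c, C.d0) = (0, C.d0) ∧ ∀ i, i ≤ m → (C.f^[i] (c, C.d0)).1 ≠ C.c0 := by
  haveI := Fact.mk C.hp
  intro n
  induction n using Nat.strong_induction_on with
  | _ n ih =>
    intro hn c hc hxn
    rcases Nat.eq_zero_or_pos n with rfl | hn1
    · rw [pow_zero, one_mul] at hxn
      have hc0' : c = 0 := by linear_combination hxn
      subst hc0'
      exact ⟨0, rfl, by
        intro i hi
        interval_cases i
        exact fun h => hc0 C h.symm⟩
    · have hcne : c ≠ 0 := by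
        rintro rfl
        have h1 : C.x ^ n * (-C.c0) = -C.c0 := by linear_combination hxn
        have h2 : (C.x ^ n - 1) * C.c0 = 0 := by linear_combination -h1
        rcases mul_eq_zero.mp h2 with h' | h'
        · exact hxpow_ne_one C n hn1 hn (by linear_combination h')
        · exact hc0 C h'
      have hstep : C.f (c, C.d0) = (C.x * (C.a + c), C.d0) := by
        rw [fGen C c C.d0 hcne (hbd0 C), idd C, xinvx C]
      set c' := C.x * (C.a + c) with hc'def
      have hc'c0 : c' - C.c0 = C.x * (c - C.c0) := by
        rw [hc'def]
        linear_combination idc C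
      have hc'ne : c' ≠ C.c0 := by
        intro h
        have hz : C.x * (c - C.c0) = 0 := by rw [← hc'c0, h]; ring
        rcases mul_eq_zero.mp hz with h' | h'
        · exact hx0 C h'
        · exact hc (by linear_combination h')
      have hxn' : C.x ^ (n - 1) * (c' - C.c0) = -C.c0 := by
        rw [hc'c0, ← mul_assoc, ← pow_succ]
        have hsum : n - 1 + 1 = n := by omega
        rw [hsum]
        exact hxn
      obtain ⟨m, hmeq, hmavoid⟩ := ih (n - 1) (by omega) (by omega) c' hc'ne hxn'
      refine ⟨m + 1, ?_, ?_⟩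
      · rw [Function.iterate_add_apply, Function.iterate_one, hstep]
        exact hmeq
      · intro i hi
        rcases Nat.eq_zero_or_pos i with rfl | hi1
        · exact hc
        · have hieq : i = (i - 1) + 1 := by omega
          rw [hieq, Function.iterate_add_apply, Function.iterate_one, hstep]
          exact hmavoid (i - 1) (by omega)

lemma T1 (C : Ctx p) (c : ZMod p) (hc : c ≠ C.c0) :
    ∃ m, C.f^[m] (c, C.d0) = (0, C.d0) ∧ ∀ i, i ≤ m → (C.f^[i] (c, C.d0)).1 ≠ C.c0 := by
  haveI := Fact.mk C.hp
  have hu : c - C.c0 ≠ 0 := sub_ne_zero.mpr hc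
  have hlu : -C.c0 * (c - C.c0)⁻¹ ≠ 0 :=
    mul_ne_zero (neg_ne_zero.mpr (hc0 C)) (inv_ne_zero hu)
  obtain ⟨n, hn, hxn⟩ := hlog C _ hlu
  have hxn' : C.x ^ n * (c - C.c0) = -C.c0 := by
    rw [hxn]
    field_simp
  exact T1aux C n hn c hc hxn'

/-- flow along the vertical line to (c0, -b) -/
lemma T2aux (C : Ctx p) : ∀ n : ℕ, n < p - 1 → ∀ d : ZMod p,
    C.x ^ n = (d - C.d0) * (-(C.x * C.d0))⁻¹ →
    ∃ m, C.f^[m] (C.c0, d) = (C.c0, -C.b) := by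
  haveI := Fact.mk C.hp
  intro n
  induction n using Nat.strong_induction_on with
  | _ n ih =>
    intro hn d hxn
    have hrel : C.x ^ n * (-(C.x * C.d0)) = d - C.d0 := by
      rw [hxn, mul_assoc, inv_mul_cancel₀ (neg_ne_zero.mpr (hxd0 C)), mul_one]
    rcases Nat.eq_zero_or_pos n with rfl | hn1
    · rw [pow_zero, one_mul] at hrel
      have hd : d = -C.b := by linear_combination - hrel + idd C
      exact ⟨0, by rw [hd, Function.iterate_zero_apply]⟩
    · have hbd : C.b + d ≠ 0 := by
        intro h
        have hd : d - C.d0 = -(C.x * C.d0) := by linear_combination h - idd C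
        rw [hd] at hrel
        have h2 : (C.x ^ n - 1) * (C.x * C.d0) = 0 := by linear_combination -hrel
        rcases mul_eq_zero.mp h2 with h' | h'
        · exact hxpow_ne_one C n hn1 hn (by linear_combination h')
        · exact hxd0 C h'
      have hstep : C.f (C.c0, d) = (C.c0, C.x⁻¹ * (C.b + d)) := by
        rw [fGen C _ _ (hc0 C) hbd, idc C]
      set d' := C.x⁻¹ * (C.b + d) with hd'def
      have hd'rel : C.x * (d' - C.d0) = d - C.d0 := by
        rw [hd'def]
        have hexp : C.x * (C.x⁻¹ * (C.b + d)) = C.b + d := by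
          rw [← mul_assoc, mul_inv_cancel₀ (hx0 C), one_mul]
        linear_combination hexp + idd C
      have hxn'' : C.x ^ (n - 1) * (-(C.x * C.d0)) = d' - C.d0 := by
        have hc1 : C.x * (C.x ^ (n-1) * (-(C.x * C.d0))) = C.x * (d' - C.d0) := by
          rw [hd'rel, ← hrel, ← mul_assoc, ← pow_succ']
          have hsum : n - 1 + 1 = n := by omega
          rw [hsum]
        exact mul_left_cancel₀ (hx0 C) hc1
      have hxn' : C.x ^ (n - 1) = (d' - C.d0) * (-(C.x * C.d0))⁻¹ := by
        rw [← hxn'']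
        rw [mul_assoc, mul_inv_cancel₀ (neg_ne_zero.mpr (hxd0 C)), mul_one]
      obtain ⟨m, hmeq⟩ := ih (n - 1) (by omega) (by omega) d' hxn'
      refine ⟨m + 1, ?_⟩
      rw [Function.iterate_add_apply, Function.iterate_one, hstep]
      exact hmeq

lemma T2 (C : Ctx p) (d : ZMod p) (hd : d ≠ C.d0) :
    ∃ m, C.f^[m] (C.c0, d) = (C.c0, -C.b) := by
  haveI := Fact.mk C.hp
  have hu : (d - C.d0) * (-(C.x * C.d0))⁻¹ ≠ 0 :=
    mul_ne_zero (sub_ne_zero.mpr hd) (inv_ne_zero (neg_ne_zero.mpr (hxd0 C)))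
  obtain ⟨n, hn, hxn⟩ := hlog C _ hu
  exact T2aux C n hn d hxn

/-- the orbit of (0, d0) never meets the vertical line c = c0 -/
lemma T4 (C : Ctx p) : ∀ k : ℕ, (C.f^[k] (0, C.d0)).1 ≠ C.c0 := by
  haveI := Fact.mk C.hp
  haveI : NeZero p := ⟨C.hp.pos.ne'⟩
  have hTd0 : C.T C.d0 = C.del + C.eps := by
    simp only [Ctx.T, Ctx.del]
    ring
  set n₀ := (-(C.T C.d0) * C.del⁻¹).val with hn₀def
  have hn₀ : ((n₀ : ℕ) : ZMod p) = -(C.T C.d0) * C.del⁻¹ := ZMod.natCast_rightInverse _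
  have hjs : ∀ j : ℕ, j ≤ n₀ → C.T C.d0 + (j : ZMod p) * C.del ≠ C.eps := by
    intro j hj hcon
    rw [hTd0] at hcon
    have h1 : (((j : ℕ) + 1 : ℕ) : ZMod p) * C.del = 0 := by
      push_cast
      linear_combination hcon
    have h2 : (((j : ℕ) + 1 : ℕ) : ZMod p) = 0 := by
      rcases mul_eq_zero.mp h1 with h' | h'
      · exact h'
      · exact absurd h' (hdel C)
    rw [ZMod.natCast_eq_zero_iff] at h2
    have hjlt : n₀ < p := ZMod.val_lt _
    have hjp : j + 1 = p := by
      have := Nat.le_of_dvd (by omega) h2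
      omega
    -- then j = p - 1 = n₀ and T d0 = del, so eps = 0
    have hn₀eq : n₀ = p - 1 := by omega
    have hcast : ((p - 1 : ℕ) : ZMod p) = -1 := by
      have hp1 : (1:ℕ) ≤ p := C.hp.pos
      push_cast [Nat.cast_sub hp1, ZMod.natCast_self]
      ring
    rw [hn₀eq, hcast] at hn₀
    have hTdel : C.T C.d0 = C.del := by
      have hdz := hdel C
      field_simp at hn₀
      linear_combination hn₀
    rw [hTd0] at hTdel
    exact heps C (by linear_combination hTdel)
  obtain ⟨M0, hM0ge, hM0snd, hM0avoid⟩ := chainStrong C n₀ C.d0 hn₀ hjs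
  have hz : C.f^[M0] (0, C.d0) = ((C.f^[M0] (0, C.d0)).1, C.d0) :=
    Prod.ext rfl hM0snd
  obtain ⟨M1, hM1eq, hM1avoid⟩ := T1 C _ (hM0avoid M0 le_rfl)
  have hMtot : C.f^[M1 + M0] (0, C.d0) = (0, C.d0) := by
    rw [Function.iterate_add_apply, hz]
    exact hM1eq
  have havoid : ∀ i, i ≤ M1 + M0 → (C.f^[i] (0, C.d0)).1 ≠ C.c0 := by
    intro i hi
    rcases le_or_gt i M0 with h | h
    · exact hM0avoid i h
    · have hieq : i = (i - M0) + M0 := by omega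
      rw [hieq, Function.iterate_add_apply, hz]
      exact hM1avoid (i - M0) (by omega)
  intro k
  induction k using Nat.strong_induction_on with
  | _ k ih =>
    rcases le_or_gt k (M1 + M0) with h | h
    · exact havoid k h
    · have hkeq : k = (k - (M1 + M0)) + (M1 + M0) := by omega
      rw [hkeq, Function.iterate_add_apply, hMtot]
      exact ih (k - (M1 + M0)) (by omega)


end S16

/-- For `a ≠ 0` and `b ≠ 0`, the permutation `π⁻¹ ∘ π_{(a,b)}` has exactly one fixed
point, namely `(a·(y−1)⁻¹, b·(x−1)⁻¹)` (with `y = x⁻¹`), and exactly two orbits of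
size at least 2; the orbit of `(0, b·(x−1)⁻¹)` contains all of
`{(c, b·(x−1)⁻¹) : c ≠ a·(y−1)⁻¹}`, and the other orbit contains all of
`{(a·(y−1)⁻¹, d) : d ≠ b·(x−1)⁻¹}`. -/
theorem stmt16 (p : ℕ) (hp : p.Prime) (hodd : Odd p) (x : ZMod p)
    (hx : ∀ z : ZMod p, z ≠ 0 → ∃ k : ℕ, x ^ k = z)
    (a b : ZMod p) (ha : a ≠ 0) (hb : b ≠ 0) :
    (∀ cd : ZMod p × ZMod p,
      piInvPiab x a b cd = cd ↔ cd = (a * (x⁻¹ - 1)⁻¹, b * (x - 1)⁻¹)) ∧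
    ∃ v : ZMod p × ZMod p,
      2 ≤ (orbit (piInvPiab x a b) (0, b * (x - 1)⁻¹)).ncard ∧
      2 ≤ (orbit (piInvPiab x a b) v).ncard ∧
      orbit (piInvPiab x a b) (0, b * (x - 1)⁻¹) ≠ orbit (piInvPiab x a b) v ∧
      (∀ w : ZMod p × ZMod p, 2 ≤ (orbit (piInvPiab x a b) w).ncard →
        orbit (piInvPiab x a b) w = orbit (piInvPiab x a b) (0, b * (x - 1)⁻¹) ∨
        orbit (piInvPiab x a b) w = orbit (piInvPiab x a b) v) ∧
      {q : ZMod p × ZMod p | q.2 = b * (x - 1)⁻¹ ∧ q.1 ≠ a * (x⁻¹ - 1)⁻¹} ⊆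
        orbit (piInvPiab x a b) (0, b * (x - 1)⁻¹) ∧
      {q : ZMod p × ZMod p | q.1 = a * (x⁻¹ - 1)⁻¹ ∧ q.2 ≠ b * (x - 1)⁻¹} ⊆
        orbit (piInvPiab x a b) v := by
  haveI := Fact.mk hp
  haveI : NeZero p := ⟨hp.pos.ne'⟩
  set C : S16.Ctx p := ⟨x, a, b, hp, hodd, hx, ha, hb⟩ with hCdef
  have hCf : piInvPiab x a b = C.f := rfl
  have hCc0 : a * (x⁻¹ - 1)⁻¹ = C.c0 := rfl
  have hCd0 : b * (x - 1)⁻¹ = C.d0 := rfl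
  rw [hCf, hCc0, hCd0]
  obtain ⟨N, hN, hper⟩ := S16.fper C
  have hfix0 : C.f (0, C.d0) ≠ (0, C.d0) := by
    intro h
    have h2 := (S16.ffix C _).mp h
    have h3 : (0 : ZMod p) = C.c0 := congrArg Prod.fst h2
    exact S16.hc0 C h3.symm
  have hfixv : C.f (C.c0, -C.b) ≠ (C.c0, -C.b) := by
    intro h
    have h2 := (S16.ffix C _).mp h
    have h3 : -C.b = C.d0 := congrArg Prod.snd h2
    exact S16.hmbd0 C h3
  constructor
  · exact S16.ffix C
  refine ⟨(C.c0, -C.b), S16.two_le_orbit C.f _ hfix0, S16.two_le_orbit C.f _ hfixv, ?_, ?_, ?_, ?_⟩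
  · -- orbits are distinct
    intro heq
    have hv : (C.c0, -C.b) ∈ orbit C.f (0, C.d0) := by
      rw [heq]
      exact S16.orbit_self C.f _
    obtain ⟨k, hk⟩ := hv
    have := S16.T4 C k
    rw [hk] at this
    exact this rfl
  · -- every big orbit is one of the two
    intro w hw
    have hwne : C.f w ≠ w := by
      intro h
      rw [S16.orbit_fixed_eq C.f w h, Set.ncard_singleton] at hw
      omega
    obtain ⟨m, hm⟩ := S16.T3 C w
    rcases hm with hm | hm
    · -- reached horizontal line
      left
      have hz1 : (C.f^[m] w).1 ≠ C.c0 := by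
        intro h
        have hfp : C.f^[m] w = (C.c0, C.d0) := Prod.ext h hm
        have hwfp : w = (C.c0, C.d0) := S16.nofix C m w hfp
        exact hwne (by rw [hwfp]; exact (S16.ffix C _).mpr rfl)
      obtain ⟨m', hm'eq, _⟩ := S16.T1 C _ hz1
      have hmem : (0, C.d0) ∈ orbit C.f w := by
        refine ⟨m' + m, ?_⟩
        rw [Function.iterate_add_apply]
        rw [show C.f^[m] w = ((C.f^[m] w).1, C.d0) from Prod.ext rfl hm]
        exact hm'eq
      exact S16.orbit_eq C.f N hN hper hmem
    · -- reached vertical line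
      right
      have hz2 : (C.f^[m] w).2 ≠ C.d0 := by
        intro h
        have hfp : C.f^[m] w = (C.c0, C.d0) := Prod.ext hm h
        have hwfp : w = (C.c0, C.d0) := S16.nofix C m w hfp
        exact hwne (by rw [hwfp]; exact (S16.ffix C _).mpr rfl)
      obtain ⟨m', hm'eq⟩ := S16.T2 C _ hz2
      have hmem : (C.c0, -C.b) ∈ orbit C.f w := by
        refine ⟨m' + m, ?_⟩
        rw [Function.iterate_add_apply]
        rw [show C.f^[m] w = (C.c0, (C.f^[m] w).2) from Prod.ext hm rfl]
        exact hm'eq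
      exact S16.orbit_eq C.f N hN hper hmem
  · -- horizontal line minus fixed point is in the first orbit
    intro q hq
    obtain ⟨hq2, hq1⟩ := hq
    obtain ⟨m, hmeq, _⟩ := S16.T1 C q.1 hq1
    have hmem : (0, C.d0) ∈ orbit C.f q := by
      refine ⟨m, ?_⟩
      rw [show q = (q.1, C.d0) from Prod.ext rfl hq2]
      exact hmeq
    rw [← S16.orbit_eq C.f N hN hper hmem]
    exact S16.orbit_self C.f q
  · -- vertical line minus fixed point is in the second orbit
    intro q hq
    obtain ⟨hq1, hq2⟩ := hq
    obtain ⟨m, hmeq⟩ := S16.T2 C q.2 hq2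
    have hmem : (C.c0, -C.b) ∈ orbit C.f q := by
      refine ⟨m, ?_⟩
      rw [show q = (C.c0, q.2) from Prod.ext hq1 rfl]
      exact hmeq
    rw [← S16.orbit_eq C.f N hN hper hmem]
    exact S16.orbit_self C.f q
end

section
/- Let p be an odd prime, let x ∈ ZMod p be a primitive root mod p, let y = x⁻¹, and let i ∈ ZMod p with i ≠ 0. The permutation of ZMod p given by a ↦ (a + i)·y has exactly one fixed point, namely i·(x−1)⁻¹, and the orbit of 0 under this permutation is the whole set ZMod p \ {i·(x−1)⁻¹}, which has p − 1 elements. -/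
/-- For `i ≠ 0`, the permutation `a ↦ (a + i)·y` of `ZMod p` (with `y = x⁻¹`) has
exactly one fixed point, namely `i·(x−1)⁻¹`, and the orbit of `0` is all of
`ZMod p \ {i·(x−1)⁻¹}`, which has `p − 1` elements. -/
theorem stmt18 (p : ℕ) (hp : p.Prime) (hodd : Odd p) (x : ZMod p)
    (hx : ∀ z : ZMod p, z ≠ 0 → ∃ k : ℕ, x ^ k = z) (i : ZMod p) (hi : i ≠ 0) :
    (∀ a : ZMod p, (a + i) * x⁻¹ = a ↔ a = i * (x - 1)⁻¹) ∧
    orbit (fun a : ZMod p => (a + i) * x⁻¹) 0 = Set.univ \ {i * (x - 1)⁻¹} ∧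
    (orbit (fun a : ZMod p => (a + i) * x⁻¹) 0).ncard = p - 1 := by
  haveI : Fact p.Prime := ⟨hp⟩
  have hp2 : 2 ≤ p := hp.two_le
  have hpne2 : p ≠ 2 := by rintro rfl; exact absurd hodd (by decide)
  have hp3 : 3 ≤ p := by omega
  have h2 : (2 : ZMod p) ≠ 0 := by
    have : ((2 : ℕ) : ZMod p) ≠ 0 := by
      rw [Ne, ZMod.natCast_eq_zero_iff]
      intro h; have := Nat.le_of_dvd (by norm_num) h; omega
    simpa using this
  have h21 : (2 : ZMod p) ≠ 1 := by
    intro h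
    have : (1 : ZMod p) = 0 := by linear_combination h
    have : ((1 : ℕ) : ZMod p) = 0 := by push_cast; exact this
    rw [ZMod.natCast_eq_zero_iff] at this
    have := Nat.le_of_dvd (by norm_num) this; omega
  obtain ⟨k0, hk0⟩ := hx 2 h2
  have hx0 : x ≠ 0 := by
    rintro rfl
    cases k0 with
    | zero => simp at hk0; exact h21 hk0.symm
    | succ n => simp [pow_succ] at hk0; exact h2 hk0.symm
  have hx1 : x ≠ 1 := by rintro rfl; simp at hk0; exact h21 hk0.symm
  have hxm1 : x - 1 ≠ 0 := sub_ne_zero.mpr hx1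
  set F : ZMod p := i * (x - 1)⁻¹ with hFdef
  have hF0 : F ≠ 0 := mul_ne_zero hi (inv_ne_zero hxm1)
  have hFx : F * (x - 1) = i := by
    rw [hFdef, mul_assoc, inv_mul_cancel₀ hxm1, mul_one]
  set y : ZMod p := x⁻¹ with hydef
  have hy0 : y ≠ 0 := inv_ne_zero hx0
  have hxy : x * y = 1 := mul_inv_cancel₀ hx0
  have hiter : ∀ k : ℕ, (fun a : ZMod p => (a + i) * y)^[k] 0 = F - F * y ^ k := by
    intro k
    induction k with
    | zero => simp
    | succ k ih =>
      rw [Function.iterate_succ_apply', ih]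
      have : y ^ (k + 1) = y ^ k * y := by ring
      rw [this]
      linear_combination (-y) * hFx + F * hxy
  have part1 : ∀ a : ZMod p, (a + i) * x⁻¹ = a ↔ a = i * (x - 1)⁻¹ := by
    intro a
    constructor
    · intro h
      have h' : a + i = a * x := by
        have := congrArg (· * x) h
        simpa [mul_assoc, inv_mul_cancel₀ hx0] using this
      have : a * (x - 1) = i := by linear_combination -h'
      rw [← this, mul_assoc, mul_inv_cancel₀ hxm1, mul_one]
    · intro h
      rw [h]
      have hFfix : (F + i) * y = F := by linear_combination (-y) * hFx + F * hxy
      exact hFfix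
  have horb : orbit (fun a : ZMod p => (a + i) * x⁻¹) 0 = Set.univ \ {F} := by
    ext v
    simp only [orbit, Set.mem_setOf_eq, Set.mem_diff, Set.mem_univ, Set.mem_singleton_iff,
      true_and]
    constructor
    · rintro ⟨k, hk⟩
      rw [hiter k] at hk
      intro hv
      rw [hv] at hk
      have : F * y ^ k = 0 := by linear_combination -hk
      exact (mul_ne_zero hF0 (pow_ne_zero k hy0)) this
    · intro hv
      have hFv : F - v ≠ 0 := sub_ne_zero.mpr (Ne.symm hv)
      set w : ZMod p := (F - v) * F⁻¹ with hwdef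
      have hw0 : w ≠ 0 := mul_ne_zero hFv (inv_ne_zero hF0)
      obtain ⟨k, hk⟩ := hx w⁻¹ (inv_ne_zero hw0)
      refine ⟨k, ?_⟩
      rw [hiter k]
      have hyk : y ^ k = w := by
        rw [hydef, inv_pow, hk, inv_inv]
      rw [hyk, hwdef]
      field_simp
      ring
  refine ⟨part1, horb, ?_⟩
  rw [horb]
  haveI : NeZero p := ⟨hp.ne_zero⟩
  have hcard : (Set.univ : Set (ZMod p)).ncard = p := by
    rw [Set.ncard_univ, Nat.card_eq_fintype_card, ZMod.card]
  have hd : (Set.univ \ {F} : Set (ZMod p)).ncard = (Set.univ : Set (ZMod p)).ncard - 1 :=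
    Set.ncard_diff_singleton_of_mem (Set.mem_univ F)
  rw [hd, hcard]
end

section
/- Let p ≥ 5 be an odd prime, let x ∈ ZMod p be a primitive root mod p, and let y = x⁻¹. For every i ∈ ZMod p, every orbit of size at least 2 of the permutation of ZMod p given by a ↦ (a + i)·y contains at least one element of the set {0, 1} and at least one element of its complement ZMod p \ {0, 1}. -/
/-- For `p ≥ 5` and every `i`, every orbit of size at least 2 of the permutation
`a ↦ (a + i)·y` of `ZMod p` (with `y = x⁻¹`) contains at least one element of
`{0, 1}` and at least one element of its complement. -/
theorem stmt19 (p : ℕ) (hp : p.Prime) (hodd : Odd p) (hp5 : 5 ≤ p) (x : ZMod p)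
    (hx : ∀ z : ZMod p, z ≠ 0 → ∃ k : ℕ, x ^ k = z) :
    ∀ (i : ZMod p) (u : ZMod p),
      2 ≤ (orbit (fun a : ZMod p => (a + i) * x⁻¹) u).ncard →
        (∃ a ∈ orbit (fun a : ZMod p => (a + i) * x⁻¹) u, a = 0 ∨ a = 1) ∧
        (∃ a ∈ orbit (fun a : ZMod p => (a + i) * x⁻¹) u, a ≠ 0 ∧ a ≠ 1) := by
  intro i u hcard
  haveI : Fact p.Prime := ⟨hp⟩
  have hcast : ∀ n : ℕ, n < p → n ≠ 0 → (n : ZMod p) ≠ 0 := by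
    intro n hn hn0 h
    rw [ZMod.natCast_eq_zero_iff] at h
    have := Nat.le_of_dvd (Nat.pos_of_ne_zero hn0) h
    omega
  have h1 : (1 : ZMod p) ≠ 0 := one_ne_zero
  have h2 : (2 : ZMod p) ≠ 0 := by
    have := hcast 2 (by omega) (by omega); simpa using this
  have h3 : (3 : ZMod p) ≠ 0 := by
    have := hcast 3 (by omega) (by omega); simpa using this
  have h21 : (2 : ZMod p) ≠ 1 := by
    intro h; apply h1; linear_combination h
  have h31 : (3 : ZMod p) ≠ 1 := by
    intro h; apply h2; linear_combination h
  have h32 : (3 : ZMod p) ≠ 2 := by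
    intro h; apply h1; linear_combination h
  obtain ⟨k₂, hk₂⟩ := hx 2 h2
  have hx1 : x ≠ 1 := by
    intro h; rw [h, one_pow] at hk₂; exact h21 hk₂.symm
  have hx0 : x ≠ 0 := by
    intro h
    rw [h] at hk₂
    rcases k₂ with _ | k
    · rw [pow_zero] at hk₂; exact h21 hk₂.symm
    · rw [zero_pow (Nat.succ_ne_zero _)] at hk₂; exact h2 hk₂.symm
  set y := x⁻¹ with hy
  have hy0 : y ≠ 0 := inv_ne_zero hx0
  have hy1 : y ≠ 1 := by
    intro h
    exact hx1 (inv_eq_one.mp h)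
  have h1y : (1 : ZMod p) - y ≠ 0 := sub_ne_zero.mpr (Ne.symm hy1)
  set s : ZMod p := i * y * (1 - y)⁻¹ with hs
  have hfix : (s + i) * y = s := by
    have hns : s * (1 - y) = i * y := by
      rw [hs, mul_assoc, inv_mul_cancel₀ h1y, mul_one]
    linear_combination -hns
  set f : ZMod p → ZMod p := fun a => (a + i) * y with hf
  have hiter : ∀ k, f^[k] u = y ^ k * (u - s) + s := by
    intro k
    induction k with
    | zero => simp
    | succ k ih =>
      rw [Function.iterate_succ_apply', ih, hf]
      simp only
      rw [pow_succ]
      linear_combination hfix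
  have hu : u ≠ s := by
    intro h
    have horb : orbit f u = {s} := by
      ext v
      constructor
      · rintro ⟨k, hk⟩
        rw [hiter, h, sub_self, mul_zero, zero_add] at hk
        exact hk ▸ rfl
      · rintro rfl
        exact ⟨0, by simpa using h⟩
    rw [horb, Set.ncard_singleton] at hcard
    omega
  have hus : u - s ≠ 0 := sub_ne_zero.mpr hu
  have hreach : ∀ t : ZMod p, t ≠ s → t ∈ orbit f u := by
    intro t ht
    have hw : (t - s) * (u - s)⁻¹ ≠ 0 :=
      mul_ne_zero (sub_ne_zero.mpr ht) (inv_ne_zero hus)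
    obtain ⟨k, hk⟩ := hx ((t - s) * (u - s)⁻¹)⁻¹ (inv_ne_zero hw)
    have hyk : y ^ k = (t - s) * (u - s)⁻¹ := by
      rw [hy, inv_pow, hk, inv_inv]
    refine ⟨k, ?_⟩
    rw [hiter, hyk]
    field_simp
    ring
  constructor
  · by_cases hs0 : s = 0
    · exact ⟨1, hreach 1 (by rw [hs0]; exact h1), Or.inr rfl⟩
    · exact ⟨0, hreach 0 (Ne.symm hs0), Or.inl rfl⟩
  · by_cases hs2 : s = 2
    · exact ⟨3, hreach 3 (by rw [hs2]; exact h32), h3, h31⟩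
    · exact ⟨2, hreach 2 (fun h => hs2 h.symm), h2, h21⟩
end
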